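/- Let a, b be real numbers with a > 6 and |b| < a. Define q = -b²/(4a), p = a/2 + q, t = (36a + 72b + a·b²)/(144 - 4a²), s = a/2 + t, and the 4×4 real matrices B = [[p, q, -3/2, 3/2], [q, p, 3/2, -3/2], [-3/2, 3/2, p, q], [3/2, -3/2, q, p]] and S = [[s, t, -3/2, 3/2], [t, s, 3/2, -3/2], [-3/2, 3/2, s, t], [3/2, -3/2, t, s]]. Then a real number λ admits a nonzero vector v ∈ ℝ⁴ with S·v = λ·B·v if and only if λ = 1 or λ = a(a² - ab - 72)/((a² - 36)(a - b)); moreover 1 - a(a² - ab - 72)/((a² - 36)(a - b)) = 36(a + b)/((a² - 36)(a - b)). -/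

import Mathlib

open Matrix

set_option maxHeartbeats 1000000 in
/-- Generalized eigenvalues of the local two-level problem S·v = λ·B·v for
the lowest-order Nedelec discretization: they are exactly λ = 1 and
λ = a(a² - ab - 72)/((a² - 36)(a - b)), and
1 - a(a² - ab - 72)/((a² - 36)(a - b)) = 36(a+b)/((a² - 36)(a - b)). -/
theorem nedelec_gen_eigenvalues (a b p q s t : ℝ)
    (ha : 6 < a) (hb : |b| < a)
    (hq : q = -(b^2) / (4*a)) (hp : p = a/2 + q)
    (ht : t = (36*a + 72*b + a*b^2) / (144 - 4*a^2)) (hs : s = a/2 + t) :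
    (∀ lam : ℝ,
      (∃ v : Fin 4 → ℝ, v ≠ 0 ∧
        (!![s, t, -3/2, 3/2;
            t, s, 3/2, -3/2;
            -3/2, 3/2, s, t;
            3/2, -3/2, t, s] : Matrix (Fin 4) (Fin 4) ℝ).mulVec v
        = lam • (!![p, q, -3/2, 3/2;
                    q, p, 3/2, -3/2;
                    -3/2, 3/2, p, q;
                    3/2, -3/2, q, p] : Matrix (Fin 4) (Fin 4) ℝ).mulVec v)
      ↔ (lam = 1 ∨ lam = a * (a^2 - a*b - 72) / ((a^2 - 36) * (a - b)))) ∧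
    1 - a * (a^2 - a*b - 72) / ((a^2 - 36) * (a - b))
      = 36 * (a + b) / ((a^2 - 36) * (a - b)) := by
  obtain ⟨hb1, hb2⟩ := abs_lt.mp hb
  have ha0 : (0:ℝ) < a := by linarith
  have ha0' : a ≠ 0 := ne_of_gt ha0
  have h36 : (0:ℝ) < a^2 - 36 := by nlinarith
  have h36' : a^2 - 36 ≠ 0 := ne_of_gt h36
  have h144 : 144 - 4*a^2 ≠ 0 := by nlinarith
  have hamb : (0:ℝ) < a - b := by linarith
  have hamb' : a - b ≠ 0 := ne_of_gt hamb
  set L : ℝ := a * (a^2 - a*b - 72) / ((a^2 - 36) * (a - b)) with hL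
  have hPQ : p + q = (a^2 - b^2)/(2*a) := by rw [hp, hq]; field_simp; ring
  have hpq_pos : 0 < p + q := by
    rw [hPQ]; apply div_pos (by nlinarith) (by linarith)
  have hpq' : p + q ≠ 0 := ne_of_gt hpq_pos
  have hST : L * (p + q) = s + t := by
    have h144'' : 144 - a^2*4 ≠ 0 := by rw [mul_comm]; exact h144
    rw [hL, hs, ht, hp, hq]; field_simp; ring
  have hd1 : p - q = a/2 := by linarith
  have hd2 : s - t = a/2 := by linarith
  have hm3 : a/2 - 3 ≠ 0 := by linarith
  have hp3 : a/2 + 3 ≠ 0 := by linarith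
  constructor
  · intro lam
    constructor
    · rintro ⟨v, hv, h⟩
      have e0 := congrFun h 0
      have e1 := congrFun h 1
      have e2 := congrFun h 2
      have e3 := congrFun h 3
      simp [Matrix.mulVec, dotProduct, Fin.sum_univ_four] at e0 e1 e2 e3
      have E1 : (s + t) * (v 0 + v 1 + v 2 + v 3)
          = lam * ((p + q) * (v 0 + v 1 + v 2 + v 3)) := by
        linear_combination e0 + e1 + e2 + e3
      have E2 : (s + t) * (v 0 + v 1 - v 2 - v 3)
          = lam * ((p + q) * (v 0 + v 1 - v 2 - v 3)) := by
        linear_combination e0 + e1 - e2 - e3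
      have E3 : (lam - 1) * ((a/2 - 3) * (v 0 - v 1 + v 2 - v 3)) = 0 := by
        linear_combination -e0 + e1 - e2 + e3
          + (v 0 - v 1 + v 2 - v 3) * hd2 - lam * (v 0 - v 1 + v 2 - v 3) * hd1
      have E4 : (lam - 1) * ((a/2 + 3) * (v 0 - v 1 - v 2 + v 3)) = 0 := by
        linear_combination -e0 + e1 + e2 - e3
          + (v 0 - v 1 - v 2 + v 3) * hd2 - lam * (v 0 - v 1 - v 2 + v 3) * hd1
      have hlamL : ∀ C : ℝ, C ≠ 0 → (s + t) * C = lam * ((p + q) * C) → lam = L := by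
        intro C hC hE
        have hz : (lam - L) * ((p + q) * C) = 0 := by
          linear_combination -C * hST - hE
        rcases mul_eq_zero.mp hz with h' | h'
        · linarith [sub_eq_zero.mp h']
        · exact absurd h' (mul_ne_zero hpq' hC)
      by_cases h1 : v 0 + v 1 + v 2 + v 3 ≠ 0
      · exact Or.inr (hlamL _ h1 E1)
      by_cases h2 : v 0 + v 1 - v 2 - v 3 ≠ 0
      · exact Or.inr (hlamL _ h2 E2)
      by_cases h3 : v 0 - v 1 + v 2 - v 3 ≠ 0
      · left
        rcases mul_eq_zero.mp E3 with h' | h'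
        · linarith [sub_eq_zero.mp h']
        · exact absurd h' (mul_ne_zero hm3 h3)
      by_cases h4 : v 0 - v 1 - v 2 + v 3 ≠ 0
      · left
        rcases mul_eq_zero.mp E4 with h' | h'
        · linarith [sub_eq_zero.mp h']
        · exact absurd h' (mul_ne_zero hp3 h4)
      push_neg at h1 h2 h3 h4
      exfalso
      apply hv
      have k0 : v 0 = 0 := by linarith
      have k1 : v 1 = 0 := by linarith
      have k2 : v 2 = 0 := by linarith
      have k3 : v 3 = 0 := by linarith
      funext i
      simp only [Pi.zero_apply]
      fin_cases i
      exacts [k0, k1, k2, k3]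
    · rintro (rfl | rfl)
      · refine ⟨![1, -1, -1, 1], ?_, ?_⟩
        · intro hcon
          have := congrFun hcon 0
          simp at this
        · funext i
          fin_cases i <;>
            simp [Matrix.mulVec, dotProduct, Fin.sum_univ_four] <;> linarith
      · refine ⟨![1, 1, 1, 1], ?_, ?_⟩
        · intro hcon
          have := congrFun hcon 0
          simp at this
        · funext i
          fin_cases i <;>
            simp [Matrix.mulVec, dotProduct, Fin.sum_univ_four] <;>
            linear_combination -hST
  · rw [hL]; field_simp; ring
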